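/- Let G be a graph on n vertices and let (P,X) be a path decomposition of G of width t−1, i.e., a tree decomposition whose tree is a path. Then G allows a bisection of width at most t·Δ(G), where Δ(G) is the maximum degree of G; in particular MinBis(G) ≤ t·Δ(G). -/

import Mathlib

open scoped Classical

namespace MinBisection

noncomputable section

variable {V ι : Type*}

/-- The number of edges of `G` with one endpoint in `B` and the other outside of `B`,
i.e., the width `e_G(B, W)` of the cut `(B, W)` where `W` is the complement of `B`. -/
def cutWidth (G : SimpleGraph V) (B : Finset V) : ℕ :=
  Nat.card {e : Sym2 V // ∃ x y, G.Adj x y ∧ x ∈ B ∧ y ∉ B ∧ e = s(x, y)}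

/-- The number of edges of `G` whose endpoints lie in two different parts of the
partition `(B, W, Z)` of the vertex set. -/
def cutWidth3 (G : SimpleGraph V) (B W Z : Finset V) : ℕ :=
  Nat.card {e : Sym2 V // ∃ x y, G.Adj x y ∧ e = s(x, y) ∧
    ¬ ((x ∈ B ∧ y ∈ B) ∨ (x ∈ W ∧ y ∈ W) ∨ (x ∈ Z ∧ y ∈ Z))}

/-- `(B, Bᶜ)` is a bisection: the sizes of the two parts differ by at most one. -/
def IsBisection [Fintype V] (B : Finset V) : Prop :=
  B.card ≤ Bᶜ.card + 1 ∧ Bᶜ.card ≤ B.card + 1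

/-- The minimum bisection width `MinBis(G)`. -/
def minBis (G : SimpleGraph V) [Fintype V] : ℕ :=
  sInf {k | ∃ B : Finset V, IsBisection B ∧ cutWidth G B = k}

/-- The maximum degree `Δ(G)`. -/
def maxDeg (G : SimpleGraph V) [Fintype V] : ℕ :=
  Finset.univ.sup fun v => Nat.card {u // G.Adj v u}

/-- The number of vertices on a longest path in `G`. -/
def longestPathCard (G : SimpleGraph V) : ℕ :=
  sSup {k | ∃ (u v : V) (p : G.Walk u v), p.IsPath ∧ k = p.support.length}

/-- The relative diameter `diam*` of a connected graph: the number of vertices on a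
longest path divided by the number of vertices. -/
def diamStar (G : SimpleGraph V) [Fintype V] : ℝ :=
  (longestPathCard G : ℝ) / (Fintype.card V : ℝ)

/-- The number of vertices on a longest path contained in the connected component `c`. -/
def compLongestPathCard (G : SimpleGraph V) (c : G.ConnectedComponent) : ℕ :=
  sSup {k | ∃ (u v : V) (p : G.Walk u v), p.IsPath ∧ G.connectedComponentMk u = c ∧
    k = p.support.length}

/-- The relative diameter `diam*` of a forest: the sum over all connected components of the
number of vertices on a longest path in the component, divided by the number of vertices. -/
def forestDiamStar (G : SimpleGraph V) [Fintype V] : ℝ :=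
  letI : Fintype G.ConnectedComponent := Fintype.ofFinite _
  (∑ c : G.ConnectedComponent, (compLongestPathCard G c : ℝ)) / (Fintype.card V : ℝ)

/-- `(T, X)` is a tree decomposition of `G`. -/
structure IsTreeDecomp (G : SimpleGraph V) (T : SimpleGraph ι) (X : ι → Finset V) : Prop where
  isTree : T.IsTree
  mem_cluster : ∀ v : V, ∃ i, v ∈ X i
  edge_cluster : ∀ ⦃u v : V⦄, G.Adj u v → ∃ i, u ∈ X i ∧ v ∈ X i
  inter_subset : ∀ ⦃i j : ι⦄ (p : T.Walk i j), p.IsPath → ∀ h ∈ p.support, X i ∩ X j ⊆ X h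

/-- The weight `w(P, X)` of a path `p` of the tree `T` with respect to the clusters `X`:
the cardinality of the union of the clusters along the path. -/
def walkWeight (X : ι → Finset V) {T : SimpleGraph ι} {i j : ι} (p : T.Walk i j) : ℕ :=
  (p.support.toFinset.biUnion X).card

/-- The relative weight `r(T, X)` of a heaviest path in the tree decomposition `(T, X)`. -/
def rTD [Fintype V] (T : SimpleGraph ι) (X : ι → Finset V) : ℝ :=
  (↑(sSup {w : ℕ | ∃ (i j : ι) (p : T.Walk i j), p.IsPath ∧ w = walkWeight X p}) : ℝ) /
    (Fintype.card V : ℝ)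

/-- The path `p` is nonredundant: one of its two ends `i` is a nonredundant end, i.e.,
`X i ≠ ∅` and no cluster along the path contains the previous one when traversed from `i`. -/
def NonredundantPath (X : ι → Finset V) {T : SimpleGraph ι} {i j : ι} (p : T.Walk i j) : Prop :=
  (X i ≠ ∅ ∧ List.Chain' (fun a b => ¬ X b ⊆ X a) p.support) ∨
  (X j ≠ ∅ ∧ List.Chain' (fun a b => ¬ X b ⊆ X a) p.reverse.support)

/-- `R_i`: the set of vertices whose path node (first node along `p`, traversed from the
end `i₀`, whose cluster contains the vertex) is `i`. -/
def Rset (X : ι → Finset V) {T : SimpleGraph ι} {i₀ j₀ : ι} (p : T.Walk i₀ j₀) (i : ι) :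
    Set V :=
  {x | ∃ (k : ℕ) (hk : k < p.support.length), p.support.get ⟨k, hk⟩ = i ∧ x ∈ X i ∧
    ∀ (l : ℕ) (hl : l < k), x ∉ X (p.support.get ⟨l, hl.trans hk⟩)}

/-- `S_i`: the union of the clusters over the component `T_i` of `T - E(P)` containing `i`,
minus `R = ⋃_{h ∈ V(P)} X^h`. -/
def Sset (X : ι → Finset V) {T : SimpleGraph ι} {i₀ j₀ : ι} (p : T.Walk i₀ j₀) (i : ι) :
    Set V :=
  {x | (∃ j, (∃ q : T.Walk i j, ∀ e ∈ q.edges, e ∉ p.edges) ∧ x ∈ X j) ∧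
    ∀ h ∈ p.support, x ∉ X h}

end

end MinBisection

section AuxForMinBis

theorem MinBisAux.support_takeUntil_eq {W : Type*} [DecidableEq W] {T : SimpleGraph W} {v w u : W}
    (p : T.Walk v w) (h : u ∈ p.support) :
    (p.takeUntil u h).support = p.support.take (p.support.idxOf u + 1) := by
  induction p with
  | nil =>
    rw [SimpleGraph.Walk.mem_support_nil_iff] at h; subst u
    simp [SimpleGraph.Walk.takeUntil]
  | cons r p ih =>
    simp only [SimpleGraph.Walk.takeUntil]
    split_ifs with hx
    · subst hx; simp
    · have h' : u ∈ p.support := by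
        cases h with
        | head => exact (hx rfl).elim
        | tail _ h' => exact h'
      simp [ih h', List.idxOf_cons, hx, List.take_cons]

theorem MinBisAux.support_dropUntil_eq {W : Type*} [DecidableEq W] {T : SimpleGraph W} {v w u : W}
    (p : T.Walk v w) (h : u ∈ p.support) :
    (p.dropUntil u h).support = p.support.drop (p.support.idxOf u) := by
  induction p with
  | nil =>
    rw [SimpleGraph.Walk.mem_support_nil_iff] at h; subst u
    simp [SimpleGraph.Walk.dropUntil]
  | cons r p ih =>
    simp only [SimpleGraph.Walk.dropUntil]
    split_ifs with hx
    · subst hx; simp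
    · have h' : u ∈ p.support := by
        cases h with
        | head => exact (hx rfl).elim
        | tail _ h' => exact h'
      simp [ih h', List.idxOf_cons, hx]

theorem MinBisAux.interval_mem {V ι : Type*} [DecidableEq ι] {T : SimpleGraph ι}
    {X : ι → Finset V}
    (hint : ∀ ⦃i j : ι⦄ (p : T.Walk i j), p.IsPath → ∀ h ∈ p.support, X i ∩ X j ⊆ X h)
    {a b : ι} {p : T.Walk a b} (hp : p.IsPath)
    {i m j : ℕ} (him : i ≤ m) (hmj : m ≤ j) (hj : j < p.support.length)
    {u : V} (hu1 : u ∈ X (p.support[i]'(lt_of_le_of_lt (him.trans hmj) hj)))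
    (hu2 : u ∈ X (p.support[j]'hj)) :
    u ∈ X (p.support[m]'(lt_of_le_of_lt hmj hj)) := by
  set L := p.support with hL
  have hi : i < L.length := lt_of_le_of_lt (him.trans hmj) hj
  have hm : m < L.length := lt_of_le_of_lt hmj hj
  have hnd : L.Nodup := hp.support_nodup
  have hA : L[i] ∈ p.support := List.getElem_mem hi
  set q1 := p.dropUntil L[i] hA with hq1
  have hs1 : q1.support = L.drop (L.idxOf L[i]) := MinBisAux.support_dropUntil_eq p hA
  have hidx : L.idxOf L[i] = i := List.Nodup.idxOf_getElem hnd i hi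
  rw [hidx] at hs1
  have hlen1 : q1.support.length = L.length - i := by rw [hs1, List.length_drop]
  have hBmem : L[j] ∈ q1.support := by
    rw [hs1]
    have : (L.drop i)[j - i]'(by simp [List.length_drop]; omega) = L[j] := by
      rw [List.getElem_drop]; congr 1; omega
    rw [← this]; exact List.getElem_mem _
  set q2 := q1.takeUntil L[j] hBmem with hq2
  have hnd1 : q1.support.Nodup := by rw [hs1]; exact hnd.sublist (List.drop_sublist i L)
  have hs2 : q2.support = q1.support.take (q1.support.idxOf L[j] + 1) :=
    MinBisAux.support_takeUntil_eq q1 hBmem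
  have hgetj : q1.support[j - i]'(by rw [hlen1]; omega) = L[j] := by
    rw [List.getElem_of_eq hs1, List.getElem_drop]; congr 1; omega
  have hidx2 : q1.support.idxOf L[j] = j - i := by
    rw [← hgetj]; exact List.Nodup.idxOf_getElem hnd1 _ _
  rw [hidx2] at hs2
  have hMmem : L[m] ∈ q2.support := by
    rw [hs2, hs1]
    have h1 : ((L.drop i).take (j - i + 1))[m - i]'(by
        simp only [List.length_take, List.length_drop]; omega) = L[m] := by
      rw [List.getElem_take, List.getElem_drop]; congr 1; omega
    exact h1 ▸ List.getElem_mem _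
  have hq2path : q2.IsPath := (hp.dropUntil hA).takeUntil hBmem
  exact hint q2 hq2path L[m] hMmem (Finset.mem_inter.2 ⟨hu1, hu2⟩)

end AuxForMinBis

/-- Let `G` be a graph on `n` vertices and `(P, X)` a path decomposition
of `G` of width `t - 1` (a tree decomposition whose tree is a path). Then `G` allows a
bisection of width at most `t Δ(G)`; in particular `MinBis(G) ≤ t Δ(G)`. -/
theorem MinBisection.minBis_le_of_pathDecomp {V ι : Type*} [Fintype V] [Fintype ι]
    (G : SimpleGraph V) (T : SimpleGraph ι) (X : ι → Finset V) (t : ℕ)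
    (hTD : IsTreeDecomp G T X)
    (hpath : ∃ (a b : ι) (p : T.Walk a b), p.IsPath ∧ ∀ i : ι, i ∈ p.support)
    (hwidth : ∀ i, (X i).card ≤ t) :
    (∃ B : Finset V, IsBisection B ∧ cutWidth G B ≤ t * maxDeg G) ∧
    minBis G ≤ t * maxDeg G := by
  classical
  obtain ⟨a0, b0, p, hp, hcov⟩ := hpath
  set L := p.support with hLdef
  have hnd : L.Nodup := hp.support_nodup
  set n := Fintype.card V with hn
  set half := (n + 1) / 2 with hhalf
  have hex : ∀ v : V, ∃ k, ∃ hk : k < L.length, v ∈ X (L[k]'hk) := by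
    intro v
    obtain ⟨i, hi⟩ := hTD.mem_cluster v
    have hiL : i ∈ L := hcov i
    refine ⟨L.idxOf i, List.idxOf_lt_length_iff.2 hiL, ?_⟩
    rw [List.getElem_idxOf]; exact hi
  let f : V → ℕ := fun v => Nat.find (hex v)
  have hfmem : ∀ v, ∃ hk : f v < L.length, v ∈ X (L[f v]'hk) := fun v => Nat.find_spec (hex v)
  have hfmin : ∀ v k (hk : k < L.length), v ∈ X (L[k]'hk) → f v ≤ k :=
    fun v k hk h => Nat.find_le ⟨hk, h⟩
  let idx : V → ℕ := fun v => (Fintype.equivFin V v : ℕ)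
  have hidxlt : ∀ v, idx v < n := fun v => (Fintype.equivFin V v).isLt
  have hidxinj : Function.Injective idx := fun u v h =>
    (Fintype.equivFin V).injective (Fin.ext h)
  let k : V → ℕ := fun v => f v * n + idx v
  have hkmono : ∀ u v, f u < f v → k u < k v := by
    intro u v h
    have h1 : k u < (f u + 1) * n := by
      have := hidxlt u
      simp only [k, add_mul, one_mul]
      omega
    have h2 : (f u + 1) * n ≤ f v * n := Nat.mul_le_mul_right n h
    have h3 : f v * n ≤ k v := Nat.le_add_right _ _
    omega
  have hkf : ∀ u v, k u ≤ k v → f u ≤ f v := by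
    intro u v h
    by_contra hc
    exact absurd (hkmono v u (by omega)) (by omega)
  have hkinj : Function.Injective k := by
    intro u v h
    have h1 : f u = f v := le_antisymm (hkf u v h.le) (hkf v u h.ge)
    apply hidxinj
    simp only [k, h1] at h
    omega
  let s : Finset ℕ := Finset.univ.image k
  have hscard : s.card = n := by
    rw [Finset.card_image_of_injective _ hkinj, Finset.card_univ]
  let oiso := s.orderIsoOfFin hscard
  let eV : V → Fin n := fun v => oiso.symm ⟨k v, Finset.mem_image_of_mem _ (Finset.mem_univ v)⟩
  have heV_lt : ∀ u v, eV u < eV v ↔ k u < k v := by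
    intro u v
    rw [← OrderIso.lt_iff_lt oiso, OrderIso.apply_symm_apply, OrderIso.apply_symm_apply,
      Subtype.mk_lt_mk]
  have heVinj : Function.Injective eV := by
    intro u v h
    apply hkinj
    have h2 : oiso (eV u) = oiso (eV v) := by rw [h]
    simpa [eV, OrderIso.apply_symm_apply, Subtype.ext_iff] using h2
  have heVsurj : Function.Surjective eV := by
    have : Function.Bijective eV := (Fintype.bijective_iff_injective_and_card eV).2
      ⟨heVinj, by simp [hn]⟩
    exact this.2
  set B : Finset V := Finset.univ.filter (fun v => (eV v : ℕ) < half) with hB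
  have hhn : half ≤ n := by omega
  have hcardB : B.card = half := by
    have himg : B.image eV = Finset.univ.filter (fun m : Fin n => (m : ℕ) < half) := by
      ext m
      simp only [Finset.mem_image, hB, Finset.mem_filter, Finset.mem_univ, true_and]
      constructor
      · rintro ⟨v, hv, rfl⟩; exact hv
      · intro hm; obtain ⟨v, rfl⟩ := heVsurj m; exact ⟨v, hm, rfl⟩
    have h2 : (Finset.univ.filter (fun m : Fin n => (m : ℕ) < half)) =
        Finset.map (Fin.castLEEmb hhn) Finset.univ := by
      ext m
      simp only [Finset.mem_filter, Finset.mem_univ, true_and, Finset.mem_map,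
        Fin.castLEEmb_apply]
      constructor
      · intro hm; exact ⟨⟨(m : ℕ), hm⟩, by ext; simp⟩
      · rintro ⟨j, rfl⟩; simpa using j.isLt
    rw [← Finset.card_image_of_injective B heVinj, himg, h2, Finset.card_map,
      Finset.card_univ, Fintype.card_fin]
  have hcardBc : Bᶜ.card = n - half := by
    rw [Finset.card_compl, hcardB]
  have hbis : IsBisection B := by
    constructor <;> rw [hcardB, hcardBc] <;> omega
  have hcut : cutWidth G B ≤ t * maxDeg G := by
    by_cases hBc : ∃ w, w ∉ B
    · obtain ⟨w1, hw1⟩ := hBc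
      have hw1h : half ≤ (eV w1 : ℕ) := by
        by_contra hc
        exact hw1 (Finset.mem_filter.2 ⟨Finset.mem_univ _, by omega⟩)
      have hhalfn : half < n := lt_of_le_of_lt hw1h (eV w1).isLt
      obtain ⟨w₀, hw₀⟩ := heVsurj ⟨half, hhalfn⟩
      have hw₀B : w₀ ∉ B := by
        simp only [hB, Finset.mem_filter, Finset.mem_univ, true_and, hw₀, not_lt]
        exact le_refl _
      obtain ⟨hmlt, hwm⟩ := hfmem w₀
      set Xm := X (L[f w₀]'hmlt) with hXm
      have claimB : ∀ v ∈ B, f v ≤ f w₀ := by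
        intro v hv
        have h1 : (eV v : ℕ) < half := (Finset.mem_filter.1 hv).2
        have h2 : eV v < eV w₀ := by
          rw [hw₀]; exact h1
        exact hkf v w₀ ((heV_lt v w₀).1 h2).le
      have claimW : ∀ w, w ∉ B → f w₀ ≤ f w := by
        intro w hw
        have h1 : half ≤ (eV w : ℕ) := by
          by_contra hc
          exact hw (Finset.mem_filter.2 ⟨Finset.mem_univ _, by omega⟩)
        have h2 : ¬ (eV w < eV w₀) := by
          rw [hw₀]; exact not_lt.2 h1
        have h3 : ¬ (k w < k w₀) := fun hc => h2 ((heV_lt w w₀).2 hc)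
        exact hkf w₀ w (not_lt.1 h3)
      have key : ∀ e : {e : Sym2 V // ∃ x y, G.Adj x y ∧ x ∈ B ∧ y ∉ B ∧ e = s(x, y)},
          ∃ q : (Σ x : {x // x ∈ Xm}, {y // G.Adj x.1 y}), e.1 = s(q.1.1, q.2.1) := by
        rintro ⟨e, x, y, hadj, hxB, hyB, he⟩
        obtain ⟨i, hxi, hyi⟩ := hTD.edge_cluster hadj
        have hiL : i ∈ L := hcov i
        have hjlt : L.idxOf i < L.length := List.idxOf_lt_length_iff.2 hiL
        have hgl : L[L.idxOf i] = i := List.getElem_idxOf hjlt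
        have hfy : f y ≤ L.idxOf i := hfmin y _ hjlt (by rw [hgl]; exact hyi)
        have h1 : f x ≤ f w₀ := claimB x hxB
        have h2 : f w₀ ≤ L.idxOf i := (claimW y hyB).trans hfy
        obtain ⟨hkx, hx1⟩ := hfmem x
        have hxj : x ∈ X (L[L.idxOf i]'hjlt) := by rw [hgl]; exact hxi
        have hxm : x ∈ Xm := MinBisAux.interval_mem hTD.inter_subset hp h1 h2 hjlt hx1 hxj
        exact ⟨⟨⟨x, hxm⟩, ⟨y, hadj⟩⟩, he⟩
      choose g hg using key
      have ginj : Function.Injective g := by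
        intro e1 e2 h
        apply Subtype.ext
        rw [hg e1, hg e2, h]
      calc cutWidth G B
          ≤ Nat.card (Σ x : {x // x ∈ Xm}, {y // G.Adj x.1 y}) :=
            Nat.card_le_card_of_injective g ginj
        _ = ∑ x : {x // x ∈ Xm}, Nat.card {y // G.Adj x.1 y} := by
            rw [Nat.card_eq_fintype_card, Fintype.card_sigma]
            exact Finset.sum_congr rfl fun x _ => (Nat.card_eq_fintype_card).symm
        _ ≤ ∑ _x : {x // x ∈ Xm}, maxDeg G :=
            Finset.sum_le_sum fun x _ =>
              Finset.le_sup (f := fun v => Nat.card {u // G.Adj v u}) (Finset.mem_univ x.1)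
        _ = Xm.card * maxDeg G := by
            rw [Finset.sum_const, smul_eq_mul, Finset.card_univ, Fintype.card_coe]
        _ ≤ t * maxDeg G := Nat.mul_le_mul_right _ (hwidth _)
    · push_neg at hBc
      have hemp : IsEmpty {e : Sym2 V // ∃ x y, G.Adj x y ∧ x ∈ B ∧ y ∉ B ∧ e = s(x, y)} := by
        constructor
        rintro ⟨e, x, y, hadj, hxB, hyB, he⟩
        exact hyB (hBc y)
      have h0 : cutWidth G B = 0 := by
        rw [show cutWidth G B =
          Nat.card {e : Sym2 V // ∃ x y, G.Adj x y ∧ x ∈ B ∧ y ∉ B ∧ e = s(x, y)} from rfl,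
          Nat.card_eq_zero]
        exact Or.inl hemp
      omega
  exact ⟨⟨B, hbis, hcut⟩, le_trans (Nat.sInf_le ⟨B, hbis, rfl⟩) hcut⟩
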